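/- Let W be a right infinite word that is prime (every subword occurs infinitely often) and not ultimately periodic, and let V be a finite word such that V^m is a subword of W for every m ≥ 1. Then for every n ≥ 1 there exists a right infinite word U such that every finite subword of V^n U is a subword of W, and U does not have V as an initial subword (prefix). -/
import Mathlib



/-- The factor (subword) of the right infinite word `W` starting at position `i`, of length `n`. -/
def FactorAt {X : Type*} (W : ℕ → X) (i n : ℕ) : List X :=
  (List.range n).map fun k => W (i + k)

/-- The finite word `u` occurs in `W` at position `i`. -/
def OccursAt {X : Type*} (W : ℕ → X) (u : List X) (i : ℕ) : Prop :=
  FactorAt W i u.length = u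

/-- `u` is a (finite) subword of the right infinite word `W`. -/
def IsFactor {X : Type*} (W : ℕ → X) (u : List X) : Prop :=
  ∃ i, OccursAt W u i

/-- A right infinite word is prime if every finite subword occurs infinitely often. -/
def IsPrimeWord {X : Type*} (W : ℕ → X) : Prop :=
  ∀ u, IsFactor W u → ∀ N, ∃ i, N ≤ i ∧ OccursAt W u i

/-- `W` is ultimately periodic. -/
def UltPeriodic {X : Type*} (W : ℕ → X) : Prop :=
  ∃ N p, 1 ≤ p ∧ ∀ i, N ≤ i → W (i + p) = W i

/-- `k`-fold concatenation power of a finite word. -/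
def wpow {X : Type*} (w : List X) (k : ℕ) : List X := (List.replicate k w).flatten

/-- The periodic right infinite word `w^ω`. -/
def perWord {X : Type*} [Inhabited X] (w : List X) : ℕ → X :=
  fun n => w.getD (n % w.length) default

/-- The right infinite word `w₁ w₂^ω`. -/
def glueWord {X : Type*} [Inhabited X] (w₁ w₂ : List X) : ℕ → X := fun n =>
  if n < w₁.length then w₁.getD n default
  else w₂.getD ((n - w₁.length) % w₂.length) default

/-- The right infinite word obtained by prefixing `U` with the finite word `w`. -/
def prependWord {X : Type*} (w : List X) (U : ℕ → X) : ℕ → X := fun n =>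
  if n < w.length then w.getD n (U 0) else U (n - w.length)

/-- The finite word `w` is a prefix of the right infinite word `U`. -/
def HasPrefixWord {X : Type*} (U : ℕ → X) (w : List X) : Prop :=
  FactorAt U 0 w.length = w


lemma factorAt_length {X : Type*} (W : ℕ → X) (i n : ℕ) : (FactorAt W i n).length = n := by
  simp [FactorAt]

lemma factorAt_add {X : Type*} (W : ℕ → X) (i p q : ℕ) :
    FactorAt W i (p + q) = FactorAt W i p ++ FactorAt W (i + p) q := by
  unfold FactorAt
  rw [List.range_add, List.map_append, List.map_map]
  congr 1
  apply List.map_congr_left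
  intro a _
  simp only [Function.comp_apply]
  congr 1
  omega

lemma occursAt_apply {X : Type*} {W : ℕ → X} {u : List X} {i : ℕ}
    (h : OccursAt W u i) {k : ℕ} (hk : k < u.length) : W (i + k) = u[k] := by
  unfold OccursAt FactorAt at h
  have h2 := List.getElem_of_eq h (i := k) (by simpa using hk)
  simpa using h2

lemma factorAt_shift {X : Type*} (W : ℕ → X) (c i m : ℕ) :
    FactorAt (fun t => W (c + t)) i m = FactorAt W (c + i) m := by
  unfold FactorAt
  apply List.map_congr_left
  intro a _
  simp only []
  congr 1
  omega

lemma occursAt_shift {X : Type*} {W : ℕ → X} {c : ℕ} {u : List X} {i : ℕ}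
    (h : OccursAt (fun t => W (c + t)) u i) : OccursAt W u (c + i) := by
  unfold OccursAt at h ⊢
  rwa [factorAt_shift] at h

lemma occursAt_append {X : Type*} {W : ℕ → X} {u v : List X} {i : ℕ} :
    OccursAt W (u ++ v) i ↔ OccursAt W u i ∧ OccursAt W v (i + u.length) := by
  unfold OccursAt
  rw [List.length_append, factorAt_add]
  constructor
  · intro h
    exact List.append_inj h (factorAt_length W i u.length)
  · rintro ⟨h1, h2⟩
    rw [h1, h2]

lemma wpow_length {X : Type*} (V : List X) (m : ℕ) :
    (wpow V m).length = m * V.length := by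
  simp [wpow, List.length_flatten, List.map_replicate, List.sum_replicate, smul_eq_mul]

lemma wpow_add {X : Type*} (V : List X) (a b : ℕ) :
    wpow V (a + b) = wpow V a ++ wpow V b := by
  unfold wpow
  rw [List.replicate_add, List.flatten_append]

lemma wpow_one {X : Type*} (V : List X) : wpow V 1 = V := by
  simp [wpow]

lemma wpow_succ {X : Type*} (V : List X) (m : ℕ) :
    wpow V (m + 1) = wpow V m ++ V := by
  rw [wpow_add, wpow_one]

lemma not_all_pows {X : Type*} {W : ℕ → X} (hnp : ¬ UltPeriodic W) {V : List X}
    (hV : V ≠ []) (j : ℕ) : ∃ m, ¬ OccursAt W (wpow V m) j := by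
  by_contra h
  push_neg at h
  apply hnp
  have hL : 1 ≤ V.length := List.length_pos_iff.mpr hV
  refine ⟨j, V.length, hL, ?_⟩
  have hVocc : ∀ q, OccursAt W V (j + q * V.length) := by
    intro q
    have h2 := h (q + 1)
    rw [wpow_succ, occursAt_append, wpow_length] at h2
    exact h2.2
  intro i hi
  set L := V.length with hLdef
  obtain ⟨q, r, hr, hiq⟩ : ∃ q r, r < L ∧ i = j + q * L + r := by
    refine ⟨(i - j) / L, (i - j) % L, Nat.mod_lt _ hL, ?_⟩
    have h3 := Nat.div_add_mod (i - j) L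
    have h4 : (i - j) / L * L = L * ((i - j) / L) := Nat.mul_comm _ _
    omega
  have h1 : W (j + q * L + r) = V[r]'hr := occursAt_apply (hVocc q) hr
  have h2 : W (j + (q + 1) * L + r) = V[r]'hr := occursAt_apply (hVocc (q + 1)) hr
  have hiL : i + L = j + (q + 1) * L + r := by
    have : (q + 1) * L = q * L + L := by ring
    omega
  rw [hiL, h2, hiq, h1]

/-- If `W` is a prime, not ultimately periodic, right infinite word and `V` is a
nonempty finite word all of whose powers are subwords of `W`, then for every `n ≥ 1`
there is a right infinite word `U` such that every subword of `V^n U` is a subword of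
`W` and `U` does not have `V` as a prefix. -/
theorem exists_tail_without_prefix {X : Type*} (W : ℕ → X)
    (hprime : IsPrimeWord W) (hnp : ¬ UltPeriodic W)
    (V : List X) (hV : V ≠ []) (hpow : ∀ m : ℕ, IsFactor W (wpow V m)) :
    ∀ n : ℕ, 1 ≤ n → ∃ U : ℕ → X,
      (∀ u : List X, IsFactor (prependWord (wpow V n) U) u → IsFactor W u) ∧
        ¬ HasPrefixWord U V := by
  intro n hn
  classical
  obtain ⟨j, hj⟩ := hpow n
  have hex : ∃ m, ¬ OccursAt W (wpow V m) j := not_all_pows hnp hV j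
  set K := Nat.find hex with hKdef
  have hK : ¬ OccursAt W (wpow V K) j := Nat.find_spec hex
  have hlt : ∀ m < K, OccursAt W (wpow V m) j := fun m hm =>
    not_not.mp (Nat.find_min hex hm)
  have hnK : n < K := by
    by_contra hc
    push_neg at hc
    apply hK
    have hsplit : wpow V n = wpow V K ++ wpow V (n - K) := by
      rw [← wpow_add]; congr 1; omega
    rw [hsplit, occursAt_append] at hj
    exact hj.1
  set M := K - 1 with hMdef
  have hM : OccursAt W (wpow V M) j := hlt M (by omega)
  have hMn : n ≤ M := by omega
  have hM1 : ¬ OccursAt W (wpow V (M + 1)) j := by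
    have hMK : M + 1 = K := by omega
    rw [hMK]; exact hK
  set L := V.length with hLdef
  set s := j + M * L with hsdef
  have hocc : OccursAt W (wpow V n) (j + (M - n) * L) := by
    have hsplit : wpow V M = wpow V (M - n) ++ wpow V n := by
      rw [← wpow_add]; congr 1; omega
    rw [hsplit, occursAt_append, wpow_length] at hM
    exact hM.2
  have hmul : M * L = (M - n) * L + n * L := by
    rw [← add_mul]; congr 1; omega
  refine ⟨fun t => W (s + t), ?_, ?_⟩
  · intro u hu
    have heq : prependWord (wpow V n) (fun t => W (s + t)) =
        fun t => W (j + (M - n) * L + t) := by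
      funext t
      unfold prependWord
      rw [wpow_length]
      split_ifs with ht
      · rw [List.getD_eq_getElem _ _ (by rw [wpow_length]; exact ht)]
        exact (occursAt_apply hocc (by rw [wpow_length]; exact ht)).symm
      · show W (s + (t - n * L)) = W (j + (M - n) * L + t)
        congr 1
        have e1 : n * L = n * V.length := by rw [hLdef]
        omega
    rw [heq] at hu
    obtain ⟨i, hi⟩ := hu
    exact ⟨j + (M - n) * L + i, occursAt_shift hi⟩
  · intro hpre
    apply hM1
    rw [wpow_succ, occursAt_append, wpow_length]
    refine ⟨hM, ?_⟩
    unfold HasPrefixWord at hpre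
    have h5 : OccursAt W V (s + 0) := by
      unfold OccursAt
      rw [← factorAt_shift]
      exact hpre
    have h6 : s + 0 = j + M * V.length := by simp [hsdef, hLdef]
    rwa [h6] at h5
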